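/- Under the same hypotheses (D acyclic on U ⊇ V, N_V(D) full-dimensional in N(G), chordless bidirected p-cycle on [p], p ≥ 4, A the ancestor set), a proper directed path in D whose target lies in {2,…,p} cannot contain any edge of E_A(1,2). -/

import Mathlib

open Matrix BigOperators

def SupportedOn {V : Type} (E : V → V → Prop) (Λ : Matrix V V ℝ) : Prop :=
  ∀ u v, ¬ E u v → Λ u v = 0

def Acyclic {V : Type} (E : V → V → Prop) : Prop :=
  ∀ v, ¬ Relation.TransGen E v v

def cycAdj (p : ℕ) (i j : Fin p) : Prop :=
  (i.1 + 1) % p = j.1 ∨ (j.1 + 1) % p = i.1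

structure Trek {V : Type} (E : V → V → Prop) (u v : V) where
  left : List V
  right : List V
  left_ne : left ≠ []
  right_ne : right ≠ []
  top_eq : left.head left_ne = right.head right_ne
  chain_left : List.Chain' E left
  chain_right : List.Chain' E right
  last_left : left.getLast left_ne = u
  last_right : right.getLast right_ne = v

def Trek.top {V : Type} {E : V → V → Prop} {u v : V} (τ : Trek E u v) : V :=
  τ.left.head τ.left_ne

def edgeProd {V : Type} (Λ : Matrix V V ℝ) (l : List V) : ℝ :=
  ((l.zip l.tail).map fun p => Λ p.1 p.2).prod

def Trek.mono {V : Type} {E : V → V → Prop} {u v : V} (Λ Ω : Matrix V V ℝ)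
    (τ : Trek E u v) : ℝ :=
  Ω τ.top τ.top * edgeProd Λ τ.left * edgeProd Λ τ.right

structure TrekSystem {V : Type} (E : V → V → Prop) {n : ℕ} (x y : Fin n → V) where
  perm : Equiv.Perm (Fin n)
  trek : ∀ i, Trek E (x i) (y (perm i))

def TrekSystem.NoSided {V : Type} {E : V → V → Prop} {n : ℕ} {x y : Fin n → V}
    (S : TrekSystem E x y) : Prop :=
  ∀ i j, i ≠ j →
    (∀ a : V, ¬(a ∈ (S.trek i).left ∧ a ∈ (S.trek j).left)) ∧
    (∀ a : V, ¬(a ∈ (S.trek i).right ∧ a ∈ (S.trek j).right))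

structure DWalk {U : Type} (E : U → U → Prop) (u v : U) where
  steps : List (Bool × U × U)
  ne : steps ≠ []
  first_eq : (steps.head ne).2.1 = u
  last_eq : (steps.getLast ne).2.2 = v
  edge : ∀ s ∈ steps, (s.1 = true → E s.2.1 s.2.2) ∧ (s.1 = false → E s.2.2 s.2.1)
  chain : List.Chain' (fun s t : Bool × U × U => s.2.2 = t.2.1) steps

def stepPairOK {U : Type} (A : Set U) (s t : Bool × U × U) : Prop :=
  ((s.1 = true ∧ t.1 = false) → s.2.2 ∈ A) ∧ (¬(s.1 = true ∧ t.1 = false) → s.2.2 ∉ A)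

def DWalk.DConn {U : Type} {E : U → U → Prop} {u v : U} (A : Set U)
    (w : DWalk E u v) : Prop :=
  List.Chain' (stepPairOK A) w.steps

def topOf {U : Type} : List (Bool × U × U) → U → U
  | [], u => u
  | (d, a, _b) :: rest, _ => if d then a else topOf rest _b

def DWalk.top {U : Type} {E : U → U → Prop} {u v : U} (w : DWalk E u v) : U :=
  topOf w.steps u

def TopsA {U : Type} (E : U → U → Prop) (A : Set U) (u v : U) : Set U :=
  {t | ∃ w : DWalk E u v, w.DConn A ∧ w.top = t}

def anAvoid {U : Type} (E : U → U → Prop) (A : Set U) (x : U) : Set U :=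
  {u | u ∉ A ∧ Relation.ReflTransGen (fun a b => E a b ∧ a ∉ A ∧ b ∉ A) u x}

def EA {U : Type} (E : U → U → Prop) (A : Set U) (n1 n2 : U) : Set (U × U) :=
  {e | E e.1 e.2 ∧ e.1 ∈ TopsA E A n1 n2 ∧ e.2 ∈ anAvoid E A n1 ∧ e.2 ∉ TopsA E A n1 n2}

def IsProperPath {U : Type} (E : U → U → Prop) (A : Set U) (l : List U) : Prop :=
  l ≠ [] ∧ List.Chain' (fun a b => E a b ∧ a ∉ A) l

def DigraphCov {U : Type} [Fintype U] [DecidableEq U] (E : U → U → Prop) :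
    Set (Matrix U U ℝ) :=
  {S | ∃ Λ Ω : Matrix U U ℝ, SupportedOn E Λ ∧ Ω.IsDiag ∧ (∀ u, 0 < Ω u u) ∧
        S = ((1 - Λ)⁻¹)ᵀ * Ω * (1 - Λ)⁻¹}

def BSupported {V : Type} (B : SimpleGraph V) (Ω : Matrix V V ℝ) : Prop :=
  ∀ u v, u ≠ v → ¬ B.Adj u v → Ω u v = 0

def MixedCov {V : Type} [Fintype V] [DecidableEq V] (D : V → V → Prop)
    (B : SimpleGraph V) : Set (Matrix V V ℝ) :=
  {S | ∃ Λ Ω : Matrix V V ℝ, SupportedOn D Λ ∧ Ω.PosDef ∧ BSupported B Ω ∧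
        S = ((1 - Λ)⁻¹)ᵀ * Ω * (1 - Λ)⁻¹}

def StrictlyGaussianCausal {V : Type} [Fintype V] [DecidableEq V]
    (D : V → V → Prop) (B : SimpleGraph V) : Prop :=
  ∃ (U : Type) (iF : Fintype U) (iD : DecidableEq U) (ι : V ↪ U) (E : U → U → Prop),
    Acyclic E ∧
      (fun S : Matrix U U ℝ => S.submatrix ι ι) '' (@DigraphCov U iF iD E) = MixedCov D B

def Chordal {V : Type} (B : SimpleGraph V) : Prop :=
  ∀ n : ℕ, 4 ≤ n → ∀ f : ZMod n → V, Function.Injective f →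
    (∀ i, B.Adj (f i) (f (i + 1))) →
    ∃ i j : ZMod n, j ≠ i + 1 ∧ i ≠ j + 1 ∧ i ≠ j ∧ B.Adj (f i) (f j)

def ChainGraph {V : Type} (D : V → V → Prop) (B : SimpleGraph V) : Prop :=
  ¬ ∃ u v, D u v ∧ Relation.ReflTransGen (fun a b => D a b ∨ B.Adj a b) v u



namespace SA

variable {U : Type}

def glue (s t : Bool × U × U) : Prop := s.2.2 = t.2.1

def edgeOK (E : U → U → Prop) (s : Bool × U × U) : Prop :=
  (s.1 = true → E s.2.1 s.2.2) ∧ (s.1 = false → E s.2.2 s.2.1)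

def PP (E : U → U → Prop) (A : Set U) (l : List U) : Prop :=
  List.Chain' E l ∧ ∀ x ∈ l, x ∉ A

def fsteps : List U → List (Bool × U × U)
  | a :: b :: r => (true, a, b) :: fsteps (b :: r)
  | _ => []

def bsteps (l : List U) : List (Bool × U × U) :=
  (fsteps l.reverse).map (fun s => (false, s.2.1, s.2.2))

lemma fsteps_nil_iff : ∀ (l : List U), fsteps l = [] ↔ l.length ≤ 1
  | [] => by simp [fsteps]
  | [a] => by simp [fsteps]
  | a :: b :: r => by simp [fsteps]

lemma bsteps_nil_iff (l : List U) : bsteps l = [] ↔ l.length ≤ 1 := by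
  simp [bsteps, fsteps_nil_iff]

lemma fsteps_chain_glue : ∀ (l : List U), List.Chain' glue (fsteps l)
  | [] => by simp [fsteps, List.Chain']
  | [a] => by simp [fsteps, List.Chain']
  | a :: b :: r => by
    rw [show fsteps (a :: b :: r) = (true, a, b) :: fsteps (b :: r) from rfl,
      List.Chain', List.isChain_cons]
    refine ⟨?_, fsteps_chain_glue (b :: r)⟩
    intro y hy
    cases r with
    | nil => simp [fsteps] at hy
    | cons c r' =>
      rw [show fsteps (b :: c :: r') = (true, b, c) :: fsteps (c :: r') from rfl] at hy
      simp only [List.head?_cons, Option.mem_def, Option.some.injEq] at hy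
      subst hy; rfl

lemma fsteps_mem {R : U → U → Prop} :
    ∀ (l : List U), List.Chain' R l → ∀ s ∈ fsteps l,
      s.1 = true ∧ R s.2.1 s.2.2 ∧ s.2.1 ∈ l ∧ s.2.2 ∈ l
  | [] => by simp [fsteps]
  | [a] => by simp [fsteps]
  | a :: b :: r => by
    intro hc s hs
    rw [show fsteps (a :: b :: r) = (true, a, b) :: fsteps (b :: r) from rfl] at hs
    rw [List.Chain', List.isChain_cons_cons] at hc
    rcases List.mem_cons.mp hs with h | h
    · subst h; exact ⟨rfl, hc.1, by simp, by simp⟩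
    · obtain ⟨h1, h2, h3, h4⟩ := fsteps_mem (b :: r) hc.2 s h
      exact ⟨h1, h2, List.mem_cons_of_mem _ h3, List.mem_cons_of_mem _ h4⟩

lemma fsteps_head? :
    ∀ (l : List U) (s : Bool × U × U), (fsteps l).head? = some s →
      ∃ h : l ≠ [], s.2.1 = l.head h
  | [] => by simp [fsteps]
  | [a] => by simp [fsteps]
  | a :: b :: r => by
    intro s hs
    rw [show fsteps (a :: b :: r) = (true, a, b) :: fsteps (b :: r) from rfl] at hs
    simp only [List.head?_cons, Option.some.injEq] at hs
    subst hs
    exact ⟨by simp, rfl⟩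

lemma fsteps_getLast? :
    ∀ (l : List U) (s : Bool × U × U), (fsteps l).getLast? = some s →
      ∃ h : l ≠ [], s.2.2 = l.getLast h
  | [] => by simp [fsteps]
  | [a] => by simp [fsteps]
  | a :: b :: r => by
    intro s hs
    cases r with
    | nil =>
      rw [show fsteps [a, b] = [(true, a, b)] from rfl] at hs
      simp only [List.getLast?_singleton, Option.some.injEq] at hs
      subst hs
      exact ⟨by simp, by simp⟩
    | cons c r' =>
      rw [show fsteps (a :: b :: c :: r') = (true, a, b) :: (true, b, c) :: fsteps (c :: r') from rfl,
        List.getLast?_cons_cons,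
        show (true, b, c) :: fsteps (c :: r') = fsteps (b :: c :: r') from rfl] at hs
      obtain ⟨h, heq⟩ := fsteps_getLast? (b :: c :: r') s hs
      refine ⟨by simp, ?_⟩
      rw [heq]
      conv_rhs => rw [List.getLast_cons (by simp : (b :: c :: r' : List U) ≠ [])]

lemma bsteps_chain_glue (l : List U) : List.Chain' glue (bsteps l) := by
  rw [bsteps, List.Chain', List.isChain_map]
  exact fsteps_chain_glue l.reverse

lemma bsteps_mem {E : U → U → Prop} (l : List U) (hc : List.Chain' E l) :
    ∀ s ∈ bsteps l, s.1 = false ∧ E s.2.2 s.2.1 ∧ s.2.1 ∈ l ∧ s.2.2 ∈ l := by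
  intro s hs
  rw [bsteps, List.mem_map] at hs
  obtain ⟨t, ht, rfl⟩ := hs
  have hc' : List.Chain' (flip E) l.reverse := List.isChain_reverse.mpr hc
  obtain ⟨h1, h2, h3, h4⟩ := fsteps_mem l.reverse hc' t ht
  exact ⟨rfl, h2, List.mem_reverse.mp h3, List.mem_reverse.mp h4⟩

lemma bsteps_head? (l : List U) (s : Bool × U × U) (hs : (bsteps l).head? = some s) :
    ∃ h : l ≠ [], s.2.1 = l.getLast h := by
  rw [bsteps, List.head?_map] at hs
  rcases hmap : (fsteps l.reverse).head? with _ | t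
  · rw [hmap] at hs; simp at hs
  · rw [hmap] at hs
    simp only [Option.map_some, Option.some.injEq] at hs
    subst hs
    obtain ⟨h, heq⟩ := fsteps_head? l.reverse t hmap
    have hl : l ≠ [] := by simpa using (by intro hc; rw [hc] at h; simp at h : l ≠ [])
    refine ⟨hl, ?_⟩
    show t.2.1 = l.getLast hl
    rw [heq]
    have := List.head?_reverse (l := l)
    rw [List.head?_eq_head h, List.getLast?_eq_getLast (l := l) hl] at this
    exact Option.some.inj this

lemma bsteps_getLast? (l : List U) (s : Bool × U × U) (hs : (bsteps l).getLast? = some s) :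
    ∃ h : l ≠ [], s.2.2 = l.head h := by
  rw [bsteps, List.getLast?_map] at hs
  rcases hmap : (fsteps l.reverse).getLast? with _ | t
  · rw [hmap] at hs; simp at hs
  · rw [hmap] at hs
    simp only [Option.map_some, Option.some.injEq] at hs
    subst hs
    obtain ⟨h, heq⟩ := fsteps_getLast? l.reverse t hmap
    have hl : l ≠ [] := by
      intro hc; rw [hc] at h; simp at h
    refine ⟨hl, ?_⟩
    show t.2.2 = l.head hl
    rw [heq]
    have := List.getLast?_reverse (l := l)
    rw [List.getLast?_eq_getLast (l := l.reverse) h, List.head?_eq_head hl] at this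
    exact Option.some.inj this

lemma spOK_of_false (A : Set U) {s t : Bool × U × U} (h : s.1 = false) (h2 : s.2.2 ∉ A) :
    stepPairOK A s t :=
  ⟨fun hc => absurd hc.1 (by simp [h]), fun _ => h2⟩

lemma spOK_of_tt (A : Set U) {s t : Bool × U × U} (h : t.1 = true) (h2 : s.2.2 ∉ A) :
    stepPairOK A s t :=
  ⟨fun hc => absurd hc.2 (by simp [h]), fun _ => h2⟩

lemma mem_of_getLast?' {α : Type*} {l : List α} {x : α} (h : l.getLast? = some x) :
    x ∈ l := by
  obtain ⟨h', rfl⟩ := List.mem_getLast?_eq_getLast (Option.mem_def.mpr h)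
  exact List.getLast_mem h'

lemma chain'_of_pairs {α : Type*} {R : α → α → Prop} :
    ∀ (l : List α), (∀ s ∈ l, ∀ t ∈ l, R s t) → List.Chain' R l
  | [] => by simp [List.Chain']
  | [a] => by simp [List.Chain']
  | a :: b :: r => fun h =>
    List.isChain_cons_cons.mpr ⟨h a (by simp) b (by simp),
      chain'_of_pairs (b :: r)
        (fun s hs t ht => h s (List.mem_cons_of_mem _ hs) t (List.mem_cons_of_mem _ ht))⟩

lemma bsteps_dconn {E : U → U → Prop} (A : Set U) (l : List U) (hc : List.Chain' E l)
    (hmem : ∀ x ∈ l, x ∉ A) : List.Chain' (stepPairOK A) (bsteps l) :=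
  chain'_of_pairs _ (fun s hs t _ =>
    spOK_of_false A (bsteps_mem l hc s hs).1 (hmem _ (bsteps_mem l hc s hs).2.2.2))

lemma fsteps_dconn {E : U → U → Prop} (A : Set U) (l : List U) (hc : List.Chain' E l)
    (hmem : ∀ x ∈ l, x ∉ A) : List.Chain' (stepPairOK A) (fsteps l) :=
  chain'_of_pairs _ (fun s hs t ht =>
    spOK_of_tt A (fsteps_mem l hc t ht).1 (hmem _ (fsteps_mem l hc s hs).2.2.2))

lemma topOf_cons_false (x y : U) (rest : List (Bool × U × U)) (u : U) :
    topOf ((false, x, y) :: rest) u = topOf rest y := by simp [topOf]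

lemma topOf_cons_true (x y : U) (rest : List (Bool × U × U)) (u : U) :
    topOf ((true, x, y) :: rest) u = x := by simp [topOf]

lemma topOf_false_prefix :
    ∀ (xs : List (Bool × U × U)), (∀ s ∈ xs, s.1 = false) →
      ∀ (ys : List (Bool × U × U)) (u b : U), (xs = [] → u = b) →
        (∀ s, xs.getLast? = some s → s.2.2 = b) →
        topOf (xs ++ ys) u = topOf ys b
  | [] => by
    intro _ ys u b h _
    simp [h rfl]
  | s :: xs' => by
    intro hall ys u b _ hlast
    obtain ⟨d, x, y⟩ := s
    have hd : d = false := hall (d, x, y) List.mem_cons_self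
    subst hd
    rw [List.cons_append, topOf_cons_false]
    apply topOf_false_prefix xs' (fun t ht => hall t (List.mem_cons_of_mem _ ht)) ys y b
    · intro h
      subst h
      have := hlast (false, x, y) (by simp)
      simpa using this
    · intro t ht
      apply hlast
      cases xs' with
      | nil => simp at ht
      | cons c xs'' => rw [List.getLast?_cons_cons]; exact ht

lemma topOf_fsteps :
    ∀ (l : List U) (h : l ≠ []), topOf (fsteps l) (l.head h) = l.head h
  | [a], _ => by simp [fsteps, topOf]
  | a :: b :: r, _ => by
    rw [show fsteps (a :: b :: r) = (true, a, b) :: fsteps (b :: r) from rfl,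
      topOf_cons_true]
    rfl

lemma topOf_split (E : U → U → Prop) (A : Set U) :
    ∀ (steps : List (Bool × U × U)) (u v : U) (hne : steps ≠ [])
      (_ : List.Chain' glue steps)
      (_ : (steps.getLast hne).2.2 = v)
      (_ : ∀ s ∈ steps, edgeOK E s)
      (_ : List.Chain' (stepPairOK A) steps),
      topOf steps u = v ∨ ∃ w' : DWalk E (topOf steps u) v, w'.DConn A
  | [], u, v, hne, _, _, _, _ => absurd rfl hne
  | (d, x, y) :: rest, u, v, hne, hch, hlast, hedge, hD => by
    cases d with
    | true =>
      right
      rw [topOf_cons_true]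
      exact ⟨⟨(true, x, y) :: rest, by simp, rfl, hlast, hedge, hch⟩, hD⟩
    | false =>
      rw [topOf_cons_false]
      cases rest with
      | nil =>
        left
        simpa [topOf] using hlast
      | cons s' rest' =>
        have hlast' : ((s' :: rest').getLast (by simp)).2.2 = v := by
          rw [← List.getLast_cons (a := (false, x, y)) (by simp : s' :: rest' ≠ [])]
          exact hlast
        exact topOf_split E A (s' :: rest') y v (by simp) hch.tail hlast'
          (fun s hs => hedge s (List.mem_cons_of_mem _ hs)) hD.tail

lemma topSplit {E : U → U → Prop} {A : Set U} {u v : U} (w : DWalk E u v)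
    (hD : w.DConn A) : w.top = v ∨ ∃ w' : DWalk E w.top v, w'.DConn A :=
  topOf_split E A w.steps u v w.ne w.chain w.last_eq w.edge hD

lemma walkA (E : U → U → Prop) (A : Set U) (b u v : U) (t1 t2 : List U)
    (h1 : PP E A (b :: t1)) (h2 : PP E A (b :: t2))
    (hu : (b :: t1).getLast (by simp) = u) (hv : (b :: t2).getLast (by simp) = v)
    (huv : u ≠ v) :
    ∃ w : DWalk E u v, w.DConn A ∧ w.top = b := by
  have hbne1 : (b :: t1) ≠ [] := by simp
  have hbne2 : (b :: t2) ≠ [] := by simp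
  cases t1 with
  | nil =>
    -- u = b
    have hub : u = b := by simpa using hu.symm
    cases t2 with
    | nil => exact absurd (hu.symm.trans hv) huv
    | cons c t2' =>
      have hfne : fsteps (b :: c :: t2') ≠ [] := by
        rw [show fsteps (b :: c :: t2') = (true, b, c) :: fsteps (c :: t2') from rfl]
        simp
      have hlaste : ((fsteps (b :: c :: t2')).getLast hfne).2.2 = v := by
        obtain ⟨h, heq⟩ := fsteps_getLast? (b :: c :: t2') _
          (List.getLast?_eq_getLast hfne)
        rw [heq]; exact hv
      refine ⟨⟨fsteps (b :: c :: t2'), hfne, ?_, hlaste,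
        fun s hs => ⟨fun h => by
          have := (fsteps_mem _ h2.1 s hs).2.1
          exact this, fun h => by
          have := (fsteps_mem _ h2.1 s hs).1
          rw [this] at h; exact absurd h (by simp)⟩,
        fsteps_chain_glue _⟩, fsteps_dconn A _ h2.1 h2.2, ?_⟩
      · obtain ⟨h, heq⟩ := fsteps_head? (b :: c :: t2') _ (List.head?_eq_head hfne)
        rw [heq, hub]
        rfl
      · show topOf (fsteps (b :: c :: t2')) u = b
        rw [hub]
        exact topOf_fsteps (b :: c :: t2') (by simp)
  | cons c1 t1' =>
    have hbne : bsteps (b :: c1 :: t1') ≠ [] := by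
      rw [Ne, bsteps_nil_iff]; simp
    have hbh : ∀ s, (bsteps (b :: c1 :: t1')).head? = some s → s.2.1 = u := by
      intro s hs
      obtain ⟨h, heq⟩ := bsteps_head? _ s hs
      rw [heq]; exact hu
    have hbl : ∀ s, (bsteps (b :: c1 :: t1')).getLast? = some s → s.2.2 = b := by
      intro s hs
      obtain ⟨h, heq⟩ := bsteps_getLast? _ s hs
      rw [heq]; rfl
    have hedgeb : ∀ s ∈ bsteps (b :: c1 :: t1'), edgeOK E s := by
      intro s hs
      obtain ⟨hf, hE, _, _⟩ := bsteps_mem _ h1.1 s hs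
      exact ⟨fun h => by rw [hf] at h; exact absurd h (by simp), fun _ => hE⟩
    cases t2 with
    | nil =>
      -- v = b, walk is purely bsteps
      have hvb : v = b := by simpa using hv.symm
      refine ⟨⟨bsteps (b :: c1 :: t1'), hbne, ?_, ?_, hedgeb, bsteps_chain_glue _⟩,
        bsteps_dconn A _ h1.1 h1.2, ?_⟩
      · exact hbh _ (List.head?_eq_head hbne)
      · rw [hvb]; exact hbl _ (List.getLast?_eq_getLast hbne)
      · show topOf (bsteps (b :: c1 :: t1')) u = b
        have htp := topOf_false_prefix (bsteps (b :: c1 :: t1'))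
          (fun s hs => (bsteps_mem _ h1.1 s hs).1) [] u b
          (fun h => absurd h hbne) hbl
        simpa [topOf] using htp
    | cons c2 t2' =>
      have hfne : fsteps (b :: c2 :: t2') ≠ [] := by
        rw [show fsteps (b :: c2 :: t2') = (true, b, c2) :: fsteps (c2 :: t2') from rfl]
        simp
      have hfh : ∀ s, (fsteps (b :: c2 :: t2')).head? = some s → s.2.1 = b := by
        intro s hs
        obtain ⟨h, heq⟩ := fsteps_head? _ s hs
        rw [heq]; rfl
      have hfl : ∀ s, (fsteps (b :: c2 :: t2')).getLast? = some s → s.2.2 = v := by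
        intro s hs
        obtain ⟨h, heq⟩ := fsteps_getLast? _ s hs
        rw [heq]; exact hv
      have hedgef : ∀ s ∈ fsteps (b :: c2 :: t2'), edgeOK E s := by
        intro s hs
        obtain ⟨ht, hE, _, _⟩ := fsteps_mem _ h2.1 s hs
        exact ⟨fun _ => hE, fun h => by rw [ht] at h; exact absurd h (by simp)⟩
      have happne : bsteps (b :: c1 :: t1') ++ fsteps (b :: c2 :: t2') ≠ [] := by
        simp only [ne_eq, List.append_eq_nil_iff]
        exact fun h => hbne h.1
      refine ⟨⟨bsteps (b :: c1 :: t1') ++ fsteps (b :: c2 :: t2'), happne, ?_, ?_, ?_, ?_⟩,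
        ?_, ?_⟩
      · -- first
        have : (bsteps (b :: c1 :: t1') ++ fsteps (b :: c2 :: t2')).head? =
            (bsteps (b :: c1 :: t1')).head? := by
          rw [List.head?_append_of_ne_nil _ hbne]
        apply hbh
        rw [← this, List.head?_eq_head]
      · -- last
        have : (bsteps (b :: c1 :: t1') ++ fsteps (b :: c2 :: t2')).getLast? =
            (fsteps (b :: c2 :: t2')).getLast? := by
          rw [List.getLast?_append, List.getLast?_eq_getLast hfne]
          simp
        apply hfl
        rw [← this, List.getLast?_eq_getLast]
      · intro s hs
        rcases List.mem_append.mp hs with h | h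
        · exact hedgeb s h
        · exact hedgef s h
      · rw [List.Chain', List.isChain_append]
        refine ⟨bsteps_chain_glue _, fsteps_chain_glue _, ?_⟩
        intro x hx y hy
        show x.2.2 = y.2.1
        rw [hbl x hx, hfh y hy]
      · show List.Chain' (stepPairOK A) _
        rw [List.Chain', List.isChain_append]
        refine ⟨bsteps_dconn A _ h1.1 h1.2, fsteps_dconn A _ h2.1 h2.2, ?_⟩
        intro x hx y hy
        have hxmem : x ∈ bsteps (b :: c1 :: t1') := mem_of_getLast?' hx
        exact spOK_of_false A (bsteps_mem _ h1.1 x hxmem).1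
          (by rw [hbl x hx]; exact h1.2 b (by simp))
      · show topOf _ u = b
        rw [topOf_false_prefix _ (fun s hs => (bsteps_mem _ h1.1 s hs).1) _ u b
          (fun h => absurd h hbne) hbl]
        exact topOf_fsteps (b :: c2 :: t2') (by simp)

lemma walkB (E : U → U → Prop) (A : Set U) (a b u v : U) (t1 : List U)
    (h1 : PP E A (b :: t1)) (hu : (b :: t1).getLast (by simp) = u)
    (hab : E a b) (ha : a ∉ A)
    (hv : a = v ∨ ∃ w' : DWalk E a v, w'.DConn A) :
    ∃ w : DWalk E u v, w.DConn A := by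
  -- build: rest and its properties
  obtain ⟨rest, hrg, hrd, hrh, hre, hrl⟩ :
      ∃ rest : List (Bool × U × U), List.Chain' glue rest ∧
        List.Chain' (stepPairOK A) rest ∧
        (∀ s, rest.head? = some s → s.2.1 = a) ∧
        (∀ s ∈ rest, edgeOK E s) ∧
        (∀ s, (((false, b, a) : Bool × U × U) :: rest).getLast? = some s → s.2.2 = v) := by
    rcases hv with rfl | ⟨w', hw'⟩
    · exact ⟨[], by simp [List.Chain'], by simp [List.Chain'], by simp, by simp, by
        intro s hs; simp only [List.getLast?_singleton, Option.some.injEq] at hs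
        subst hs; rfl⟩
    · refine ⟨w'.steps, w'.chain, hw', ?_, w'.edge, ?_⟩
      · intro s hs
        have := w'.first_eq
        rw [List.head?_eq_head w'.ne] at hs
        rw [← Option.some.inj hs]
        exact this
      · intro s hs
        have hcons : (((false, b, a) : Bool × U × U) :: w'.steps).getLast? =
            w'.steps.getLast? := by
          cases hsteps : w'.steps with
          | nil => exact absurd hsteps w'.ne
          | cons x xs => exact List.getLast?_cons_cons
        rw [hcons, List.getLast?_eq_getLast w'.ne] at hs
        rw [← Option.some.inj hs]
        exact w'.last_eq
  have hsteps_ne : bsteps (b :: t1) ++ ((false, b, a) : Bool × U × U) :: rest ≠ [] := by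
    simp
  refine ⟨⟨bsteps (b :: t1) ++ ((false, b, a) : Bool × U × U) :: rest, hsteps_ne,
    ?_, ?_, ?_, ?_⟩, ?_⟩
  · -- first_eq
    cases t1 with
    | nil =>
      have hbn : bsteps [b] = [] := by rw [bsteps_nil_iff]; simp
      have hh : (bsteps [b] ++ ((false, b, a) : Bool × U × U) :: rest).head? =
          some ((false, b, a) : Bool × U × U) := by rw [hbn]; rfl
      have hhd := Option.some.inj ((List.head?_eq_head hsteps_ne).symm.trans hh)
      rw [hhd]
      show b = u
      simpa using hu
    | cons c t1' =>
      have hbne : bsteps (b :: c :: t1') ≠ [] := by rw [Ne, bsteps_nil_iff]; simp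
      have hh : (bsteps (b :: c :: t1') ++ ((false, b, a) : Bool × U × U) :: rest).head? =
          (bsteps (b :: c :: t1')).head? := List.head?_append_of_ne_nil _ hbne
      have := bsteps_head? (b :: c :: t1') _ (by
        rw [← hh, List.head?_eq_head hsteps_ne])
      obtain ⟨h, heq⟩ := this
      rw [heq]; exact hu
  · -- last_eq
    have hl : (bsteps (b :: t1) ++ ((false, b, a) : Bool × U × U) :: rest).getLast? =
        (((false, b, a) : Bool × U × U) :: rest).getLast? := by
      rw [List.getLast?_append, List.getLast?_eq_getLast (by simp)]
      simp
    apply hrl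
    rw [← hl, List.getLast?_eq_getLast]
  · -- edge
    intro s hs
    rcases List.mem_append.mp hs with h | h
    · obtain ⟨hf, hE, _, _⟩ := bsteps_mem _ h1.1 s h
      exact ⟨fun hc => by rw [hf] at hc; exact absurd hc (by simp), fun _ => hE⟩
    · rcases List.mem_cons.mp h with h | h
      · subst h
        exact ⟨fun hc => absurd hc (by simp), fun _ => hab⟩
      · exact hre s h
  · -- chain glue
    rw [List.Chain', List.isChain_append]
    refine ⟨bsteps_chain_glue _, ?_, ?_⟩
    · rw [List.isChain_cons]
      refine ⟨?_, hrg⟩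
      intro y hy
      show a = y.2.1
      exact (hrh y hy).symm
    · intro x hx y hy
      obtain ⟨h, heq⟩ := bsteps_getLast? _ x hx
      simp only [List.head?_cons, Option.mem_def, Option.some.injEq] at hy
      subst hy
      show x.2.2 = b
      rw [heq]; rfl
  · -- DConn
    show List.Chain' (stepPairOK A) _
    rw [List.Chain', List.isChain_append]
    refine ⟨bsteps_dconn A _ h1.1 h1.2, ?_, ?_⟩
    · rw [List.isChain_cons]
      refine ⟨?_, hrd⟩
      intro y _
      exact spOK_of_false A rfl ha
    · intro x hx y hy
      have hxmem : x ∈ bsteps (b :: t1) := mem_of_getLast?' hx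
      obtain ⟨h, heq⟩ := bsteps_getLast? _ x hx
      exact spOK_of_false A (bsteps_mem _ h1.1 x hxmem).1
        (by rw [heq]; exact h1.2 b (by simp))

lemma PP_of_proper (E : U → U → Prop) (A : Set U) :
    ∀ (l : List U) (h : l ≠ []), List.Chain' (fun a b => E a b ∧ a ∉ A) l →
      l.getLast h ∉ A → PP E A l
  | [a], _, _, hlA => ⟨by simp [List.Chain'], by simpa using hlA⟩
  | a :: b :: r, _, hch, hlA => by
    rw [List.Chain', List.isChain_cons_cons] at hch
    have hlA' : (b :: r).getLast (by simp) ∉ A := by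
      rwa [← List.getLast_cons (a := a) (by simp : (b : U) :: r ≠ [])]
    obtain ⟨ih1, ih2⟩ := PP_of_proper E A (b :: r) (by simp) hch.2 hlA'
    refine ⟨List.isChain_cons_cons.mpr ⟨hch.1.1, ih1⟩, ?_⟩
    intro x hx
    rcases List.mem_cons.mp hx with h | h
    · subst h; exact hch.1.2
    · exact ih2 x h

lemma list_of_anAvoid {E : U → U → Prop} {A : Set U} {n b : U} (hn : n ∉ A)
    (h : b ∈ anAvoid E A n) :
    ∃ t : List U, PP E A (b :: t) ∧ (b :: t).getLast (by simp) = n := by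
  obtain ⟨hbA, hr⟩ := h
  clear hbA
  induction hr using Relation.ReflTransGen.head_induction_on with
  | refl => exact ⟨[], ⟨by simp [List.Chain'], by simpa using hn⟩, by simp⟩
  | @head x c h' _ ih =>
    obtain ⟨t, ⟨hch, hmem⟩, hlast⟩ := ih
    refine ⟨c :: t, ⟨List.isChain_cons_cons.mpr ⟨h'.1, hch⟩, ?_⟩, ?_⟩
    · intro z hz
      rcases List.mem_cons.mp hz with h | h
      · subst h; exact h'.2.1
      · exact hmem z h
    · rw [List.getLast_cons (by simp : (c : U) :: t ≠ [])]
      exact hlast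

lemma mem_zip_tail {α : Type*} :
    ∀ {l : List α} {x y : α}, (x, y) ∈ l.zip l.tail → ∃ l1 l2, l = l1 ++ x :: y :: l2 := by
  intro l
  induction l with
  | nil => simp
  | cons a t ih =>
    intro x y h
    cases t with
    | nil => simp at h
    | cons b r =>
      rw [show (a :: b :: r).zip (a :: b :: r).tail =
        (a, b) :: ((b :: r).zip (b :: r).tail) from rfl] at h
      rcases List.mem_cons.mp h with h | h
      · obtain ⟨h1, h2⟩ := Prod.mk.injEq .. ▸ h
        exact ⟨[], r, by rw [Prod.mk.injEq] at h; rw [h.1, h.2] at *; rfl⟩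
      · obtain ⟨l1, l2, heq⟩ := ih h
        exact ⟨a :: l1, l2, by rw [heq]; rfl⟩

end SA


theorem stmt12 {U : Type} (E : U → U → Prop) (hE : Acyclic E) (A : Set U)
    {p : ℕ} (hp : 4 ≤ p) (cyc : Fin p ↪ U) (hA : ∀ i, cyc i ∉ A)
    (hdc : ∀ i j : Fin p, i ≠ j →
      ((∃ w : DWalk E (cyc i) (cyc j), w.DConn A) ↔ cycAdj p i j))
    (l : List U) (hne : l ≠ []) (hl : IsProperPath E A l)
    (htarget : ∃ j : Fin p, j ≠ ⟨0, by omega⟩ ∧ l.getLast hne = cyc j) :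
    ∀ e ∈ l.zip l.tail, e ∉ EA E A (cyc ⟨0, by omega⟩) (cyc ⟨1, by omega⟩) := by
  intro e he hmem
  obtain ⟨a, b⟩ := e
  simp only [EA, Set.mem_setOf_eq] at hmem
  obtain ⟨hab, haT, hbAv, hbT⟩ := hmem
  obtain ⟨j, hj0, hlastl⟩ := htarget
  obtain ⟨l1, l2, rfl⟩ := SA.mem_zip_tail he
  have hch2 : List.Chain' (fun x y => E x y ∧ x ∉ A) (a :: b :: l2) :=
    (List.isChain_append.mp hl.2).2.1
  rw [List.Chain', List.isChain_cons_cons] at hch2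
  obtain ⟨⟨hab', haA⟩, hch3⟩ := hch2
  have hlast2 : (b :: l2).getLast (by simp) = cyc j := by
    have h1 : (l1 ++ a :: b :: l2).getLast? = (b :: l2).getLast? := by
      rw [List.getLast?_append, List.getLast?_cons_cons,
        List.getLast?_eq_getLast (l := b :: l2) (by simp)]
      simp
    have h2 := List.getLast?_eq_getLast (l := l1 ++ a :: b :: l2) hne
    rw [hlastl] at h2
    rw [h2, List.getLast?_eq_getLast (l := b :: l2) (by simp)] at h1
    exact (Option.some.inj h1).symm
  have hPP2 : SA.PP E A (b :: l2) := SA.PP_of_proper E A _ (by simp) hch3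
    (by rw [hlast2]; exact hA j)
  obtain ⟨t0, hPP0, h0last⟩ := SA.list_of_anAvoid (hA ⟨0, by omega⟩) hbAv
  have h01 : (⟨0, by omega⟩ : Fin p) ≠ ⟨1, by omega⟩ := by
    intro h; rw [Fin.mk.injEq] at h; omega
  by_cases hj1 : j = ⟨1, by omega⟩
  · subst hj1
    obtain ⟨w, hD, htop⟩ := SA.walkA E A b _ _ t0 l2 hPP0 hPP2 h0last hlast2
      (cyc.injective.ne h01)
    exact hbT ⟨w, hD, htop⟩
  · have h0j : cyc ⟨0, by omega⟩ ≠ cyc j := cyc.injective.ne (Ne.symm hj0)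
    obtain ⟨wA, hDA, _⟩ := SA.walkA E A b _ _ t0 l2 hPP0 hPP2 h0last hlast2 h0j
    have hadj0 := (hdc ⟨0, by omega⟩ j (Ne.symm hj0)).1 ⟨wA, hDA⟩
    have hjlt : j.1 < p := j.2
    have hj0' : j.1 ≠ 0 := fun h => hj0 (Fin.ext h)
    have hj1' : j.1 ≠ 1 := fun h => hj1 (Fin.ext h)
    have hjp : j.1 = p - 1 := by
      rcases hadj0 with h | h
      · rw [Nat.mod_eq_of_lt (by omega : 0 + 1 < p)] at h; omega
      · rcases Nat.lt_or_ge (j.1 + 1) p with hlt | hge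
        · rw [Nat.mod_eq_of_lt hlt] at h
          simp only [Fin.val_mk] at h
          omega
        · omega
    obtain ⟨W, hWD, hWtop⟩ := haT
    have hsplit := SA.topSplit W hWD
    rw [hWtop] at hsplit
    obtain ⟨wB, hDB⟩ := SA.walkB E A a b _ _ l2 hPP2 hlast2 hab' haA hsplit
    have hadjB := (hdc j ⟨1, by omega⟩ hj1).1 ⟨wB, hDB⟩
    rcases hadjB with h | h
    · rw [show j.1 + 1 = p by omega, Nat.mod_self] at h
      simp only [Fin.val_mk] at h
      omega
    · rw [Nat.mod_eq_of_lt (by omega : 1 + 1 < p)] at h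
      omega
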